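/- Let $M$ be a free $\mathbb{Z}$-module of finite rank, let $\Delta$ be a bounded symmetric convex subset of $M \otimes_{\mathbb{Z}} \mathbb{R}$, and let $a \geq 1$ be a real number. Then $0 \leq \log \#(M \cap a\Delta) - \log \#(M \cap \Delta) \leq \log(\lceil 2a \rceil) \cdot \mathrm{rk}_{\mathbb{Z}} M$. -/

import Mathlib

open Real Pointwise

/-- Let `M` be a free `ℤ`-module of finite rank, `Δ` a bounded symmetric convex
subset of `M ⊗ ℝ`, and `a ≥ 1` a real number.  Then
`0 ≤ log #(M ∩ aΔ) - log #(M ∩ Δ) ≤ log ⌈2a⌉ · rk M`.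
Here `M ⊗ ℝ` is realized as the real span of a lattice `M` inside a finite-dimensional real
vector space `V`. -/
theorem stmt_5 {V : Type*} [NormedAddCommGroup V] [NormedSpace ℝ V]
    [FiniteDimensional ℝ V]
    (M : Submodule ℤ V) [Module.Free ℤ ↥M] [Module.Finite ℤ ↥M]
    (Δ : Set V) (hΔspan : Δ ⊆ (Submodule.span ℝ (M : Set V) : Set V))
    (hΔbdd : Bornology.IsBounded Δ) (hΔconv : Convex ℝ Δ)
    (hΔsymm : ∀ x ∈ Δ, -x ∈ Δ)
    (a : ℝ) (ha : 1 ≤ a) :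
    0 ≤ Real.log ((((M : Set V)) ∩ a • Δ).ncard) - Real.log (((M : Set V) ∩ Δ).ncard) ∧
    Real.log (((M : Set V) ∩ a • Δ).ncard) - Real.log (((M : Set V) ∩ Δ).ncard) ≤
      Real.log (⌈2 * a⌉₊ : ℝ) * (Module.finrank ℤ ↥M) := by
  classical
  have hk2 : 2 ≤ ⌈2 * a⌉₊ := by
    have h2 : ((2 : ℕ) : ℝ) ≤ 2 * a := by push_cast; linarith
    calc (2 : ℕ) = ⌈((2 : ℕ) : ℝ)⌉₊ := by simp
      _ ≤ ⌈2 * a⌉₊ := Nat.ceil_le_ceil h2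
  set k : ℕ := ⌈2 * a⌉₊ with hkdef
  haveI : NeZero k := ⟨by omega⟩
  have hka : 2 * a ≤ (k : ℝ) := Nat.le_ceil _
  have ha0 : (0 : ℝ) < a := by linarith
  have hk0 : (0 : ℝ) < (k : ℝ) := by exact_mod_cast Nat.lt_of_lt_of_le Nat.zero_lt_two hk2
  have hlogk : 0 ≤ Real.log k :=
    Real.log_nonneg (by exact_mod_cast (by omega : 1 ≤ k))
  have hRHS : 0 ≤ Real.log k * (Module.finrank ℤ ↥M) :=
    mul_nonneg hlogk (Nat.cast_nonneg _)
  by_cases hne : Δ.Nonempty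
  swap
  · rw [Set.not_nonempty_iff_eq_empty] at hne
    simp only [hne, Set.smul_set_empty, Set.inter_empty, Set.ncard_empty, Nat.cast_zero,
      Real.log_zero, sub_self]
    exact ⟨le_refl _, hRHS⟩
  obtain ⟨x₀, hx₀⟩ := hne
  have h0Δ : (0 : V) ∈ Δ := by
    have := hΔconv hx₀ (hΔsymm x₀ hx₀) (by norm_num : (0:ℝ) ≤ 1/2)
      (by norm_num : (0:ℝ) ≤ 1/2) (by norm_num)
    simpa using this
  have hscale : ∀ x ∈ Δ, ∀ c : ℝ, 0 ≤ c → c ≤ 1 → c • x ∈ Δ := by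
    intro x hx c hc0 hc1
    have := hΔconv h0Δ hx (by linarith : (0:ℝ) ≤ 1 - c) hc0 (by ring)
    simpa using this
  have hsub : ((M : Set V) ∩ Δ) ⊆ ((M : Set V) ∩ a • Δ) := by
    rintro x ⟨hxM, hxΔ⟩
    refine ⟨hxM, ⟨a⁻¹ • x, hscale x hxΔ a⁻¹ (by positivity) ?_, ?_⟩⟩
    · rw [inv_le_one_iff₀]; right; exact ha
    · show a • a⁻¹ • x = x
      rw [smul_smul, mul_inv_cancel₀ (by linarith), one_smul]
  by_cases hfin : ((M : Set V) ∩ Δ).Finite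
  swap
  · have htinf : ¬ ((M : Set V) ∩ a • Δ).Finite := fun h => hfin (h.subset hsub)
    rw [Set.Infinite.ncard htinf, Set.Infinite.ncard hfin]
    simp only [Nat.cast_zero, Real.log_zero, sub_self]
    exact ⟨le_refl _, hRHS⟩
  -- main case
  set ι := Module.Free.ChooseBasisIndex ℤ ↥M with hι
  set b : Module.Basis ι ℤ ↥M := Module.Free.chooseBasis ℤ ↥M with hb
  set S : Set ↥M := {m : ↥M | (m : V) ∈ Δ} with hSdef
  set T : Set ↥M := {m : ↥M | (m : V) ∈ a • Δ} with hTdef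
  have hS : Subtype.val '' S = ((M : Set V) ∩ Δ) := by
    ext x
    simp only [Set.mem_image, Set.mem_setOf_eq, Subtype.exists, exists_and_left, hSdef,
      Set.mem_inter_iff, SetLike.mem_coe]
    constructor
    · rintro ⟨y, hy, hyM, rfl⟩; exact ⟨hyM, hy⟩
    · rintro ⟨hxM, hx⟩; exact ⟨x, hx, hxM, rfl⟩
  have hT : Subtype.val '' T = ((M : Set V) ∩ a • Δ) := by
    ext x
    simp only [Set.mem_image, Set.mem_setOf_eq, Subtype.exists, exists_and_left, hTdef,
      Set.mem_inter_iff, SetLike.mem_coe]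
    constructor
    · rintro ⟨y, hy, hyM, rfl⟩; exact ⟨hyM, hy⟩
    · rintro ⟨hxM, hx⟩; exact ⟨x, hx, hxM, rfl⟩
  have hfinS : S.Finite :=
    Set.Finite.of_finite_image (hS ▸ hfin) Subtype.val_injective.injOn
  set f : ↥M → ι → ZMod k := fun m i => ((b.repr m i : ℤ) : ZMod k) with hfdef
  have key : ∀ m ∈ T, ∀ m' ∈ T, f m = f m' → ∃ u ∈ S, (k : ℤ) • u = m - m' := by
    intro m hm m' hm' hf
    have hdvd : ∀ i, (k : ℤ) ∣ b.repr (m - m') i := by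
      intro i
      have h := congrFun hf i
      simp only [hfdef] at h
      have : ((b.repr (m - m') i : ℤ) : ZMod k) = 0 := by
        rw [map_sub, Finsupp.sub_apply]
        push_cast
        rw [h, sub_self]
      exact (ZMod.intCast_zmod_eq_zero_iff_dvd _ k).mp this
    set u : ↥M := ∑ i, (b.repr (m - m') i / (k : ℤ)) • b i with hudef
    have hku : (k : ℤ) • u = m - m' := by
      rw [hudef, Finset.smul_sum]
      simp_rw [smul_smul, Int.mul_ediv_cancel' (hdvd _)]
      exact b.sum_repr (m - m')
    refine ⟨u, ?_, hku⟩
    obtain ⟨d, hd, hda⟩ := hm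
    obtain ⟨d', hd', hda'⟩ := hm'
    have hw : (1/2 : ℝ) • d + (1/2 : ℝ) • (-d') ∈ Δ :=
      hΔconv hd (hΔsymm d' hd') (by norm_num) (by norm_num) (by norm_num)
    have h1 : (k : ℝ) • (u : V) = (m : V) - (m' : V) := by
      calc (k : ℝ) • (u : V) = ((k : ℤ) : ℝ) • (u : V) := by norm_num
        _ = (k : ℤ) • (u : V) := Int.cast_smul_eq_zsmul ℝ _ _
        _ = (((k : ℤ) • u : ↥M) : V) := by norm_cast
        _ = ((m - m' : ↥M) : V) := by rw [hku]
        _ = (m : V) - (m' : V) := by norm_cast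
    have h2 : (m : V) - (m' : V) = (2 * a) • ((1/2 : ℝ) • d + (1/2 : ℝ) • (-d')) := by
      rw [← hda, ← hda']
      module
    have h3 : (u : V) = ((k : ℝ)⁻¹ * (2 * a)) • ((1/2 : ℝ) • d + (1/2 : ℝ) • (-d')) := by
      rw [← smul_smul, ← h2, ← h1, inv_smul_smul₀ (ne_of_gt hk0)]
    show (u : V) ∈ Δ
    rw [h3]
    refine hscale _ hw _ (by positivity) ?_
    rw [← div_eq_inv_mul, div_le_one hk0]
    exact hka
  have hfib : ∀ c : ι → ZMod k, (T ∩ f ⁻¹' {c}).Finite ∧ (T ∩ f ⁻¹' {c}).ncard ≤ S.ncard := by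
    intro c
    rcases (T ∩ f ⁻¹' {c}).eq_empty_or_nonempty with h | ⟨m₀, hm₀T, hm₀c⟩
    · simp [h]
    · set F := T ∩ f ⁻¹' {c} with hF
      have hm₀c' : f m₀ = c := hm₀c
      have hkey' : ∀ m, m ∈ F → ∃ u, u ∈ S ∧ (k : ℤ) • u = m - m₀ := by
        rintro m ⟨hmT, hmc⟩
        rw [Set.mem_preimage, Set.mem_singleton_iff] at hmc
        obtain ⟨u, hu1, hu2⟩ := key m hmT m₀ hm₀T (by rw [hmc, hm₀c'])
        exact ⟨u, hu1, hu2⟩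
      choose! g hgS hgk using hkey'
      have hginj : Set.InjOn g F := by
        intro m hm m' hm' hgm
        have h1 := hgk m hm
        rw [hgm, hgk m' hm'] at h1
        exact (sub_left_inj.mp h1).symm
      have himg : g '' F ⊆ S := by
        rintro _ ⟨m, hm, rfl⟩; exact hgS m hm
      have hFfin : F.Finite := Set.Finite.of_finite_image (hfinS.subset himg) hginj
      refine ⟨hFfin, ?_⟩
      calc F.ncard = (g '' F).ncard := (Set.ncard_image_of_injOn hginj).symm
        _ ≤ S.ncard := Set.ncard_le_ncard himg hfinS
  have hTfin : T.Finite := by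
    have hTU : T = ⋃ c : ι → ZMod k, (T ∩ f ⁻¹' {c}) := by
      ext m; simp
    rw [hTU]
    exact Set.finite_iUnion fun c => (hfib c).1
  -- counting
  have hcount : T.ncard ≤ S.ncard * k ^ Fintype.card ι := by
    set A := hTfin.toFinset with hAdef
    have hA : T.ncard = A.card := Set.ncard_eq_toFinset_card T hTfin
    have hstep : A.card ≤ S.ncard * (A.image f).card := by
      refine Finset.card_le_mul_card_image (f := f) A S.ncard ?_
      intro c _
      have hset : ((A.filter (fun m => f m = c)) : Set ↥M) = T ∩ f ⁻¹' {c} := by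
        ext m
        simp only [Finset.coe_filter, Finset.mem_coe, Set.Finite.mem_toFinset, hAdef,
          Set.mem_setOf_eq, Set.mem_inter_iff, Set.mem_preimage, Set.mem_singleton_iff]
      calc (A.filter (fun m => f m = c)).card
          = ((A.filter (fun m => f m = c)) : Set ↥M).ncard := (Set.ncard_coe_finset _).symm
        _ = (T ∩ f ⁻¹' {c}).ncard := by rw [hset]
        _ ≤ S.ncard := (hfib c).2
    have himg : (A.image f).card ≤ k ^ Fintype.card ι := by
      calc (A.image f).card ≤ Fintype.card (ι → ZMod k) := Finset.card_le_univ _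
        _ = Fintype.card (ZMod k) ^ Fintype.card ι := Fintype.card_fun
        _ = k ^ Fintype.card ι := by rw [ZMod.card]
    calc T.ncard = A.card := hA
      _ ≤ S.ncard * (A.image f).card := hstep
      _ ≤ S.ncard * k ^ Fintype.card ι := Nat.mul_le_mul_left _ himg
  have hsn : ((M : Set V) ∩ Δ).ncard = S.ncard := by
    rw [← hS, Set.ncard_image_of_injective _ Subtype.val_injective]
  have htfinV : ((M : Set V) ∩ a • Δ).Finite := hT ▸ hTfin.image _
  have htn : ((M : Set V) ∩ a • Δ).ncard = T.ncard := by
    rw [← hT, Set.ncard_image_of_injective _ Subtype.val_injective]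
  set n := ((M : Set V) ∩ Δ).ncard with hndef
  set N := ((M : Set V) ∩ a • Δ).ncard with hNdef
  have hn1 : 1 ≤ n := by
    rw [hndef]
    have : ((M : Set V) ∩ Δ).Nonempty := ⟨0, M.zero_mem, h0Δ⟩
    exact (Set.ncard_pos hfin).mpr this
  have hnN : n ≤ N := Set.ncard_le_ncard hsub htfinV
  have hNle : N ≤ k ^ Module.finrank ℤ ↥M * n := by
    rw [htn, hsn, Module.finrank_eq_card_chooseBasisIndex ℤ ↥M, mul_comm]
    exact hcount
  have hnpos : (0 : ℝ) < (n : ℝ) := by exact_mod_cast hn1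
  have hNpos : (0 : ℝ) < (N : ℝ) := by exact_mod_cast lt_of_lt_of_le hn1 hnN
  constructor
  · have : Real.log (n : ℝ) ≤ Real.log (N : ℝ) :=
      Real.log_le_log hnpos (by exact_mod_cast hnN)
    linarith
  · have hcast : (N : ℝ) ≤ (k : ℝ) ^ Module.finrank ℤ ↥M * (n : ℝ) := by
      exact_mod_cast hNle
    have h1 : Real.log (N : ℝ) ≤ Real.log ((k : ℝ) ^ Module.finrank ℤ ↥M * (n : ℝ)) :=
      Real.log_le_log hNpos hcast
    rw [Real.log_mul (pow_ne_zero _ (ne_of_gt hk0)) (ne_of_gt hnpos), Real.log_pow] at h1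
    push_cast at h1 ⊢
    linarith
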